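/- Let G ⊆ ℂ be a domain, let f be analytic on G, and let C be a closed subset in G (i.e., C ⊆ G and C is closed in ℂ). Then f is bounded on C if and only if there exists a set C₁ that is a closed subset in G, is an Arakeljan set in G, satisfies C ⊆ C₁, and on which f is bounded. -/

import Mathlib

open Set Metric

/-- A Jordan curve: the image of a continuous injective map from the unit circle into ℂ. -/
def IsJordanCurve (J : Set ℂ) : Prop :=
  ∃ f : ℂ → ℂ, ContinuousOn f (sphere (0 : ℂ) 1) ∧ Set.InjOn f (sphere (0 : ℂ) 1) ∧
    J = f '' (sphere (0 : ℂ) 1)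

/-- The topological boundary of `K` is a finite union of pairwise disjoint Jordan curves. -/
def JordanBoundary (K : Set ℂ) : Prop :=
  ∃ (n : ℕ) (J : Fin n → Set ℂ), (∀ i, IsJordanCurve (J i)) ∧
    (Pairwise fun i j => Disjoint (J i) (J j)) ∧ frontier K = ⋃ i, J i

/-- `g` is a `G`-hole of `F`: a connected component of `G \ F` contained in some
compact subset of `G`. -/
def IsGHole (G F g : Set ℂ) : Prop :=
  (∃ z ∈ G \ F, g = connectedComponentIn (G \ F) z) ∧
  ∃ L : Set ℂ, IsCompact L ∧ L ⊆ G ∧ g ⊆ L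

/-- `F` is an Arakeljan set in `G`: it has no `G`-holes, and for every connected compact
`K ⊆ G` whose boundary is a finite union of pairwise disjoint Jordan curves, the union of
all `G`-holes of `F ∪ K` is contained in some compact subset of `G`. -/
def IsArakeljan (G F : Set ℂ) : Prop :=
  (∀ g : Set ℂ, ¬ IsGHole G F g) ∧
  ∀ K : Set ℂ, IsCompact K → IsConnected K → K ⊆ G → JordanBoundary K →
    ∃ L : Set ℂ, IsCompact L ∧ L ⊆ G ∧ (⋃ g ∈ {g : Set ℂ | IsGHole G (F ∪ K) g}, g) ⊆ L

namespace ArakAux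

/-- The frontier of a connected component in an open set lies in the frontier of the set. -/
lemma frontier_cci_subset {U : Set ℂ} (hU : IsOpen U) (x : ℂ) :
    frontier (connectedComponentIn U x) ⊆ frontier U := by
  intro y hy
  have hco : IsOpen (connectedComponentIn U x) := hU.connectedComponentIn
  have hyc : y ∈ closure (connectedComponentIn U x) := hy.1
  have hync : y ∉ connectedComponentIn U x := by
    intro h
    exact hy.2 (by rwa [hco.interior_eq])
  refine ⟨closure_mono (connectedComponentIn_subset U x) hyc, ?_⟩
  rw [hU.interior_eq]
  intro hyU
  have h1 : IsOpen (connectedComponentIn U y) := hU.connectedComponentIn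
  have h2 : y ∈ connectedComponentIn U y := mem_connectedComponentIn hyU
  obtain ⟨w, hw1, hw2⟩ := mem_closure_iff.mp hyc _ h1 h2
  have e1 : connectedComponentIn U y = connectedComponentIn U w := connectedComponentIn_eq hw1
  have e2 : connectedComponentIn U x = connectedComponentIn U w := connectedComponentIn_eq hw2
  rw [e1, ← e2] at h2
  exact hync h2

variable {G : Set ℂ}

/-- the frontier of a hole is contained in (the closed set) `F`. -/
lemma frontier_hole_subset (hGopen : IsOpen G) {F g : Set ℂ} (hFc : IsClosed F)
    (hg : IsGHole G F g) : frontier g ⊆ F := by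
  obtain ⟨⟨w, hw, rfl⟩, L, hL, hLG, hgL⟩ := hg
  have hUopen : IsOpen (G \ F) := hGopen.sdiff hFc
  have h1 := frontier_cci_subset hUopen w
  intro y hy
  have hyG : y ∈ G := by
    have : closure (connectedComponentIn (G \ F) w) ⊆ L := hL.isClosed.closure_subset_iff.mpr hgL
    exact hLG (this hy.1)
  have h2 : y ∉ G \ F := by
    intro hc
    exact (h1 hy).2 (by rwa [hUopen.interior_eq])
  by_contra hyF
  exact h2 ⟨hyG, hyF⟩

/-- Core filling lemma: if a ball misses `F` and meets a hole of `F`, it is contained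
in that hole. -/
lemma ball_subset_hole (hGopen : IsOpen G) {F c L : Set ℂ} (hFc : IsClosed F)
    (hc : ∃ w ∈ G \ F, c = connectedComponentIn (G \ F) w)
    (hLcpt : IsCompact L) (hLG : L ⊆ G) (hcL : c ⊆ L)
    {z₀ : ℂ} {ε : ℝ} (hε : 0 < ε) (hdis : Disjoint (ball z₀ ε) F)
    {y : ℂ} (hy : y ∈ c) (hyb : y ∈ ball z₀ ε) : ball z₀ ε ⊆ c := by
  obtain ⟨w, hwGF, rfl⟩ := hc
  have hyGF : y ∈ G \ F := connectedComponentIn_subset _ _ hy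
  set U : Set ℂ := ball z₀ ε ∩ G with hU
  have hUopen : IsOpen U := isOpen_ball.inter hGopen
  have hUsub : U ⊆ G \ F := fun z hz => ⟨hz.2, fun hzF => Set.disjoint_left.mp hdis hz.1 hzF⟩
  have hyU : y ∈ U := ⟨hyb, hyGF.1⟩
  set c' : Set ℂ := connectedComponentIn U y with hc'
  have hyc' : y ∈ c' := mem_connectedComponentIn hyU
  have hc'c : c' ⊆ connectedComponentIn (G \ F) w := by
    rw [connectedComponentIn_eq hy]
    exact (isPreconnected_connectedComponentIn).subset_connectedComponentIn hyc'
      ((connectedComponentIn_subset U y).trans hUsub)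
  have hclc : closure c' ⊆ L := by
    refine hLcpt.isClosed.closure_subset_iff.mpr (hc'c.trans hcL)
  have hfr : frontier c' ⊆ sphere z₀ ε := by
    intro p hp
    have hpU : p ∈ frontier U := frontier_cci_subset hUopen y hp
    have hpG : p ∈ G := hLG (hclc hp.1)
    rcases frontier_inter_subset (ball z₀ ε) G hpU with h | h
    · rw [frontier_ball z₀ hε.ne'] at h
      exact h.1
    · exfalso
      have : p ∉ interior G := h.2.2
      exact this (by rwa [hGopen.interior_eq])
  -- now a clopen argument inside the (preconnected) ball
  have hc'open : IsOpen c' := hUopen.connectedComponentIn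
  have hcover : ball z₀ ε ⊆ c' ∪ (closure c')ᶜ := by
    intro p hp
    by_cases hpc : p ∈ closure c'
    · left
      rcases (closure_eq_self_union_frontier c' ▸ hpc) with h | h
      · exact h
      · exact absurd (mem_ball.mp hp) (by simp [mem_sphere.mp (hfr h)])
    · exact Or.inr hpc
  have hball : ball z₀ ε ⊆ c' := by
    refine IsPreconnected.subset_left_of_subset_union hc'open
      (isClosed_closure.isOpen_compl) ?_ hcover ⟨y, hyb, hyc'⟩
      ((convex_ball z₀ ε).isPreconnected)
    exact Set.disjoint_left.mpr fun a ha hna => hna (subset_closure ha)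
  exact hball.trans hc'c

/-- if `z ∈ g` for a hole `g` of `F`, then `g` is the component of `z`. -/
lemma hole_eq_cci {F g : Set ℂ} (hg : IsGHole G F g) {z : ℂ} (hz : z ∈ g) :
    z ∈ G \ F ∧ g = connectedComponentIn (G \ F) z := by
  obtain ⟨⟨w, hw, rfl⟩, -⟩ := hg
  exact ⟨connectedComponentIn_subset _ _ hz, connectedComponentIn_eq hz⟩

/-- Maximum modulus: a bound on `F` propagates to every hole of `F`. -/
lemma abs_le_on_hole (hGopen : IsOpen G) {f : ℂ → ℂ} (hf : DifferentiableOn ℂ f G)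
    {F g : Set ℂ} (hFc : IsClosed F) (hg : IsGHole G F g) {M' : ℝ}
    (hbd : ∀ z ∈ F, ‖f z‖ ≤ M') : ∀ z ∈ g, ‖f z‖ ≤ M' := by
  obtain ⟨hgdata, L, hL, hLG, hgL⟩ := id hg
  have hclos : closure g ⊆ L := hL.isClosed.closure_subset_iff.mpr hgL
  have hgG : closure g ⊆ G := hclos.trans hLG
  have hbdd : Bornology.IsBounded g := hL.isBounded.subset hgL
  have hdc : DiffContOnCl ℂ f g :=
    ⟨hf.mono (subset_closure.trans hgG), hf.continuousOn.mono hgG⟩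
  intro z hz
  have hfr : ∀ w ∈ frontier g, ‖f w‖ ≤ M' := by
    intro w hw
    have : w ∈ F := frontier_hole_subset hGopen hFc hg hw
    simpa using hbd w this
  have := Complex.norm_le_of_forall_mem_frontier_norm_le hbdd hdc hfr (subset_closure hz)
  simpa using this

/-- The filled set: `F` together with all its `G`-holes. -/
def Fill (G F : Set ℂ) : Set ℂ := F ∪ {z : ℂ | ∃ g : Set ℂ, IsGHole G F g ∧ z ∈ g}

lemma subset_Fill (G F : Set ℂ) : F ⊆ Fill G F := subset_union_left

lemma Fill_subset (hFG : F ⊆ G) : Fill G F ⊆ G := by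
  rintro z (hz | ⟨g, hg, hzg⟩)
  · exact hFG hz
  · obtain ⟨-, L, hL, hLG, hgL⟩ := hg
    exact hLG (hgL hzg)

lemma abs_le_Fill (hGopen : IsOpen G) {f : ℂ → ℂ} (hf : DifferentiableOn ℂ f G)
    {F : Set ℂ} (hFc : IsClosed F) {M' : ℝ}
    (hbd : ∀ z ∈ F, ‖f z‖ ≤ M') : ∀ z ∈ Fill G F, ‖f z‖ ≤ M' := by
  rintro z (hz | ⟨g, hg, hzg⟩)
  · exact hbd z hz
  · exact abs_le_on_hole hGopen hf hFc hg hbd z hzg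

lemma isClosed_Fill (hGopen : IsOpen G) {F : Set ℂ} (hFc : IsClosed F) :
    IsClosed (Fill G F) := by
  rw [← closure_subset_iff_isClosed]
  intro z hz
  by_cases hzF : z ∈ F
  · exact Or.inl hzF
  · obtain ⟨ε, hε, hball⟩ := Metric.isOpen_iff.mp hFc.isOpen_compl z hzF
    have hdis : Disjoint (ball z ε) F := Set.disjoint_left.mpr fun a ha => hball ha
    have hzW : z ∈ closure {w : ℂ | ∃ g : Set ℂ, IsGHole G F g ∧ w ∈ g} := by
      rcases (closure_union (s := F) ▸ hz) with h | h
      · exact absurd (hFc.closure_eq ▸ h) hzF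
      · exact h
    obtain ⟨y, hyb, g, hg, hyg⟩ := mem_closure_iff.mp hzW _ isOpen_ball (mem_ball_self hε)
    obtain ⟨hgdata, L, hL, hLG, hgL⟩ := id hg
    have : ball z ε ⊆ g := ball_subset_hole hGopen hFc hgdata hL hLG hgL hε hdis hyg hyb
    exact Or.inr ⟨g, hg, this (mem_ball_self hε)⟩

lemma no_holes_Fill (hGopen : IsOpen G) {F : Set ℂ} (hFc : IsClosed F) :
    ∀ g : Set ℂ, ¬ IsGHole G (Fill G F) g := by
  intro g hg
  obtain ⟨⟨z, hzGFill, rfl⟩, L, hL, hLG, hgL⟩ := hg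
  have hzGF : z ∈ G \ F := ⟨hzGFill.1, fun hzF => hzGFill.2 (subset_Fill G F hzF)⟩
  set h : Set ℂ := connectedComponentIn (G \ F) z with hh
  have hzh : z ∈ h := mem_connectedComponentIn hzGF
  have hsub1 : h ⊆ G \ Fill G F := by
    intro p hp
    have hpGF : p ∈ G \ F := connectedComponentIn_subset _ _ hp
    refine ⟨hpGF.1, ?_⟩
    rintro (hpF | ⟨w, hw, hpw⟩)
    · exact hpGF.2 hpF
    · have e1 : w = connectedComponentIn (G \ F) p := (hole_eq_cci hw hpw).2
      have e2 : h = w := by rw [e1, hh, connectedComponentIn_eq hp]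
      exact hzGFill.2 (Or.inr ⟨w, hw, e2 ▸ hzh⟩)
  have hzGFill' : z ∈ G \ Fill G F := hsub1 hzh
  have hsub2 : connectedComponentIn (G \ Fill G F) z ⊆ h :=
    (isPreconnected_connectedComponentIn).subset_connectedComponentIn
      (mem_connectedComponentIn hzGFill')
      ((connectedComponentIn_subset _ _).trans
        (fun p hp => ⟨hp.1, fun hpF => hp.2 (subset_Fill G F hpF)⟩))
  have hsub3 : h ⊆ connectedComponentIn (G \ Fill G F) z :=
    (isPreconnected_connectedComponentIn).subset_connectedComponentIn hzh hsub1
  have heq : connectedComponentIn (G \ Fill G F) z = h := subset_antisymm hsub2 hsub3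
  have hhole : IsGHole G F h := ⟨⟨z, hzGF, rfl⟩, L, hL, hLG, heq ▸ hgL⟩
  exact hzGFill'.2 (Or.inr ⟨h, hhole, hzh⟩)

/-! ### Grid squares -/

/-- closed axis-parallel rectangle, given as `(a, b, c, d)` for `[a,b] × [c,d]`. -/
def Rect (r : ℝ × ℝ × ℝ × ℝ) : Set ℂ :=
  {z : ℂ | r.1 ≤ z.re ∧ z.re ≤ r.2.1 ∧ r.2.2.1 ≤ z.im ∧ z.im ≤ r.2.2.2}

lemma isClosed_Rect (r : ℝ × ℝ × ℝ × ℝ) : IsClosed (Rect r) := by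
  have h1 : IsClosed {z : ℂ | r.1 ≤ z.re} := isClosed_le continuous_const Complex.continuous_re
  have h2 : IsClosed {z : ℂ | z.re ≤ r.2.1} := isClosed_le Complex.continuous_re continuous_const
  have h3 : IsClosed {z : ℂ | r.2.2.1 ≤ z.im} := isClosed_le continuous_const Complex.continuous_im
  have h4 : IsClosed {z : ℂ | z.im ≤ r.2.2.2} := isClosed_le Complex.continuous_im continuous_const
  have : Rect r = {z : ℂ | r.1 ≤ z.re} ∩ ({z | z.re ≤ r.2.1} ∩ ({z | r.2.2.1 ≤ z.im} ∩ {z | z.im ≤ r.2.2.2})) := by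
    ext z; simp [Rect, and_assoc]
  rw [this]
  exact h1.inter (h2.inter (h3.inter h4))

noncomputable def gctr (k n m : ℤ) : ℂ := ⟨((n:ℝ) + 2⁻¹) * 2^k, ((m:ℝ) + 2⁻¹) * 2^k⟩

noncomputable def gRect (k n m : ℤ) : Set ℂ :=
  Rect ((n:ℝ) * 2^k, ((n:ℝ)+1) * 2^k, (m:ℝ) * 2^k, ((m:ℝ)+1) * 2^k)

lemma zpow_pos' (k : ℤ) : (0:ℝ) < 2^k := zpow_pos (by norm_num) k

lemma gctr_re (k n m : ℤ) : (gctr k n m).re = ((n:ℝ) + 2⁻¹) * 2^k := rfl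

lemma gctr_im (k n m : ℤ) : (gctr k n m).im = ((m:ℝ) + 2⁻¹) * 2^k := rfl

lemma mem_gRect_iff {z : ℂ} {k n m : ℤ} : z ∈ gRect k n m ↔
    (n:ℝ) * 2^k ≤ z.re ∧ z.re ≤ ((n:ℝ)+1) * 2^k ∧ (m:ℝ) * 2^k ≤ z.im ∧ z.im ≤ ((m:ℝ)+1) * 2^k :=
  Iff.rfl

lemma re_sub_gctr {z : ℂ} {k n m : ℤ} (hz : z ∈ gRect k n m) :
    |z.re - (gctr k n m).re| ≤ 2^k/2 ∧ |z.im - (gctr k n m).im| ≤ 2^k/2 := by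
  rw [mem_gRect_iff] at hz
  obtain ⟨h1, h2, h3, h4⟩ := hz
  rw [gctr_re, gctr_im]
  have e1 : ((n:ℝ)+1) * 2^k - ((n:ℝ) + 2⁻¹) * 2^k = 2^k/2 := by ring
  have e2 : ((n:ℝ)) * 2^k - ((n:ℝ) + 2⁻¹) * 2^k = -(2^k/2) := by ring
  have e3 : ((m:ℝ)+1) * 2^k - ((m:ℝ) + 2⁻¹) * 2^k = 2^k/2 := by ring
  have e4 : ((m:ℝ)) * 2^k - ((m:ℝ) + 2⁻¹) * 2^k = -(2^k/2) := by ring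
  constructor
  · rw [abs_le]
    constructor <;> [linarith [e2]; linarith [e1]]
  · rw [abs_le]
    constructor <;> [linarith [e4]; linarith [e3]]

lemma dist_gctr_le {z : ℂ} {k n m : ℤ} (hz : z ∈ gRect k n m) :
    dist z (gctr k n m) ≤ 2^k := by
  obtain ⟨h1, h2⟩ := re_sub_gctr hz
  have := Complex.norm_le_abs_re_add_abs_im (z - gctr k n m)
  rw [Complex.dist_eq]
  rw [Complex.sub_re, Complex.sub_im] at this
  have hp := zpow_pos' k
  calc ‖z - gctr k n m‖ ≤ _ := this
    _ ≤ 2^k := by linarith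

lemma mem_own_gRect (z : ℂ) (k : ℤ) :
    z ∈ gRect k ⌊z.re/2^k⌋ ⌊z.im/2^k⌋ := by
  have hp := zpow_pos' k
  have f1 : (⌊z.re/2^k⌋ : ℝ) ≤ z.re / 2^k := Int.floor_le _
  have f2 : z.re / 2^k < ⌊z.re/2^k⌋ + 1 := Int.lt_floor_add_one _
  have f3 : (⌊z.im/2^k⌋ : ℝ) ≤ z.im / 2^k := Int.floor_le _
  have f4 : z.im / 2^k < ⌊z.im/2^k⌋ + 1 := Int.lt_floor_add_one _
  rw [mem_gRect_iff]
  refine ⟨?_, ?_, ?_, ?_⟩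
  · calc (⌊z.re/2^k⌋ : ℝ) * 2^k ≤ (z.re / 2^k) * 2^k := by nlinarith
      _ = z.re := by field_simp
  · calc z.re = (z.re / 2^k) * 2^k := by field_simp
      _ ≤ ((⌊z.re/2^k⌋ : ℝ) + 1) * 2^k := by nlinarith
  · calc (⌊z.im/2^k⌋ : ℝ) * 2^k ≤ (z.im / 2^k) * 2^k := by nlinarith
      _ = z.im := by field_simp
  · calc z.im = (z.im / 2^k) * 2^k := by field_simp
      _ ≤ ((⌊z.im/2^k⌋ : ℝ) + 1) * 2^k := by nlinarith

lemma exists_zpow_between {a : ℝ} (ha : 0 < a) : ∃ k : ℤ, a < (2:ℝ)^k ∧ (2:ℝ)^k ≤ 2*a := by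
  refine ⟨Int.log 2 (2*a), ?_, ?_⟩
  · have h2 := Int.lt_zpow_succ_log_self (b := 2) (by norm_num) (2*a)
    have h2' : 2*a < (2:ℝ)^(Int.log 2 (2*a) + 1) := by exact_mod_cast h2
    rw [zpow_add_one₀ (by norm_num : (2:ℝ) ≠ 0)] at h2'
    linarith
  · have h1 := Int.zpow_log_le_self (b := 2) (by norm_num) (by linarith : (0:ℝ) < 2*a)
    exact_mod_cast h1

lemma exists_zpow_le {a : ℝ} (ha : 0 < a) : ∃ k : ℤ, (2:ℝ)^k ≤ a := by
  obtain ⟨k, -, hk⟩ := exists_zpow_between (by linarith : (0:ℝ) < a/2)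
  exact ⟨k, by linarith⟩

/-! ### The grid neighborhood `NSet` of `C` avoiding `Bad` -/

variable (C Bad : Set ℂ)

def Sel (p : ℤ×ℤ×ℤ) : Prop :=
  (∃ y ∈ C, dist y (gctr p.1 p.2.1 p.2.2) ≤ 2 * 2^p.1) ∧
  (∀ b ∈ Bad, 400 * 2^p.1 ≤ dist b (gctr p.1 p.2.1 p.2.2))

def NSet : Set ℂ := {z : ℂ | ∃ p : ℤ×ℤ×ℤ, Sel C Bad p ∧ z ∈ gRect p.1 p.2.1 p.2.2}

variable {C Bad}

lemma not_bad_of_mem_NSet {z : ℂ} (hz : z ∈ NSet C Bad) : z ∉ Bad := by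
  obtain ⟨p, hsel, hzp⟩ := hz
  intro hzB
  have h1 := hsel.2 z hzB
  have h2 := dist_gctr_le hzp
  have hp := zpow_pos' p.1
  linarith

lemma mem_NSet_of_near_far {z y : ℂ} (hyC : y ∈ C) {t : ℝ} (ht : 0 < t)
    (hnear : dist z y ≤ 2 * t) (hfar : ∀ b ∈ Bad, 100000 * t ≤ dist b z) :
    z ∈ NSet C Bad := by
  obtain ⟨k, hk1, hk2⟩ := exists_zpow_between (by linarith : (0:ℝ) < 4*t)
  have hp := zpow_pos' k
  refine ⟨(k, ⌊z.re/2^k⌋, ⌊z.im/2^k⌋), ⟨⟨y, hyC, ?_⟩, ?_⟩, mem_own_gRect z k⟩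
  · have h2 := dist_gctr_le (mem_own_gRect z k)
    calc dist y (gctr k ⌊z.re/2^k⌋ ⌊z.im/2^k⌋) ≤ dist y z + dist z (gctr k _ _) :=
          dist_triangle _ _ _
      _ ≤ 2*t + 2^k := by rw [dist_comm y z]; exact add_le_add hnear h2
      _ ≤ 2 * 2^k := by linarith
  · intro b hb
    have h1 := hfar b hb
    have h2 := dist_gctr_le (mem_own_gRect z k)
    have h3 := dist_triangle b z (gctr k ⌊z.re/2^k⌋ ⌊z.im/2^k⌋)
    have h4 : dist b (gctr k ⌊z.re/2^k⌋ ⌊z.im/2^k⌋) ≥ dist b z - 2^k := by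
      have := dist_triangle b (gctr k ⌊z.re/2^k⌋ ⌊z.im/2^k⌋) z
      rw [dist_comm z (gctr k ⌊z.re/2^k⌋ ⌊z.im/2^k⌋)] at h2
      linarith
    have h5 : (100000:ℝ) * t ≥ 100000 * (2^k/8) := by linarith
    linarith

lemma abs_re_diff_le_dist (z w : ℂ) : |z.re - w.re| ≤ dist z w := by
  rw [Complex.dist_eq, ← Complex.sub_re]
  exact Complex.abs_re_le_norm _

lemma log2_zpow (k : ℤ) : Int.log 2 ((2:ℝ)^k) = k := by
  rw [show ((2:ℝ)) = ((2:ℕ):ℝ) by norm_num]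
  exact Int.log_zpow (by norm_num) k

lemma gctr_mem_gRect (k n m : ℤ) : gctr k n m ∈ gRect k n m := by
  have hp := zpow_pos' k
  rw [mem_gRect_iff, gctr_re, gctr_im]
  refine ⟨by nlinarith, by nlinarith, by nlinarith, by nlinarith⟩

lemma sel_finite (hBadne : Bad.Nonempty) (x₀ : ℂ) {ε h₁ : ℝ} (hh₁ : 0 < h₁) :
    {p : ℤ×ℤ×ℤ | Sel C Bad p ∧ h₁ ≤ 2^p.1 ∧
      (gRect p.1 p.2.1 p.2.2 ∩ ball x₀ ε).Nonempty}.Finite := by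
  obtain ⟨b₀, hb₀⟩ := hBadne
  set H : ℝ := (dist b₀ x₀ + ε)/399 with hHdef
  set B : ℝ := (|x₀.re| + |x₀.im| + ε + 2*h₁)/h₁ with hBdef
  have key : ∀ p : ℤ×ℤ×ℤ, Sel C Bad p → h₁ ≤ 2^p.1 →
      (gRect p.1 p.2.1 p.2.2 ∩ ball x₀ ε).Nonempty →
      (Int.log 2 h₁ ≤ p.1 ∧ p.1 ≤ Int.log 2 H) ∧
      (|(p.2.1:ℝ)| ≤ B ∧ |(p.2.2:ℝ)| ≤ B) := by
    rintro ⟨k, n, m⟩ hsel hk ⟨z', hz'g, hz'b⟩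
    dsimp only at hsel hk hz'g ⊢
    have hp := zpow_pos' k
    have hd1 : dist z' (gctr k n m) ≤ 2^k := dist_gctr_le hz'g
    have hd2 : dist z' x₀ < ε := mem_ball.mp hz'b
    have hεpos : 0 < ε := lt_of_le_of_lt dist_nonneg hd2
    have hup : (2:ℝ)^k ≤ H := by
      have h1 := hsel.2 b₀ hb₀
      have h2 : dist b₀ (gctr k n m) ≤ dist b₀ x₀ + ε + 2^k := by
        have t1 := dist_triangle b₀ x₀ (gctr k n m)
        have t2 := dist_triangle x₀ z' (gctr k n m)
        have : dist x₀ z' = dist z' x₀ := dist_comm _ _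
        linarith
      rw [hHdef]
      linarith
    refine ⟨⟨?_, ?_⟩, ?_, ?_⟩
    · have := Int.log_mono_right (b := 2) hh₁ hk
      rwa [log2_zpow] at this
    · have := Int.log_mono_right (b := 2) hp hup
      rwa [log2_zpow] at this
    · -- n bound
      have h3 : |z'.re - (gctr k n m).re| ≤ 2^k/2 := (re_sub_gctr hz'g).1
      have h4 : |z'.re - x₀.re| ≤ dist z' x₀ := abs_re_diff_le_dist z' x₀
      have h5 : |(gctr k n m).re| ≤ |x₀.re| + 2^k/2 + ε := by
        have t1 : |(gctr k n m).re - z'.re| = |z'.re - (gctr k n m).re| := abs_sub_comm _ _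
        have t2 := abs_add_le ((gctr k n m).re - z'.re) (z'.re - x₀.re)
        have t3 := abs_add_le ((gctr k n m).re - x₀.re) x₀.re
        simp only [sub_add_cancel, sub_add_sub_cancel] at t2 t3
        linarith
      have h8 := abs_add_le (((n:ℝ)+2⁻¹)*2^k) (-(2^k/2))
      have e8 : ((n:ℝ)+2⁻¹)*2^k + -(2^k/2) = (n:ℝ)*2^k := by ring
      rw [e8, abs_neg, abs_of_pos (by positivity : (0:ℝ) < 2^k/2)] at h8
      have h9 : |(n:ℝ)| * 2^k ≤ |x₀.re| + ε + 2^k := by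
        have : |(n:ℝ) * 2^k| = |(n:ℝ)| * 2^k := by
          rw [abs_mul, abs_of_pos hp]
        rw [gctr_re] at h5
        linarith
      by_cases hcase : (1:ℝ) ≤ |(n:ℝ)|
      · have h10 : (|(n:ℝ)| - 1) * h₁ ≤ (|(n:ℝ)| - 1) * 2^k :=
          mul_le_mul_of_nonneg_left hk (by linarith)
        rw [hBdef, le_div_iff₀ hh₁]
        nlinarith [abs_nonneg x₀.re, abs_nonneg x₀.im]
      · rw [hBdef, le_div_iff₀ hh₁]
        nlinarith [abs_nonneg x₀.re, abs_nonneg x₀.im]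
    · -- m bound
      have h3 : |z'.im - (gctr k n m).im| ≤ 2^k/2 := (re_sub_gctr hz'g).2
      have h4 : |z'.im - x₀.im| ≤ dist z' x₀ := by
        rw [Complex.dist_eq, ← Complex.sub_im]
        exact Complex.abs_im_le_norm _
      have h5 : |(gctr k n m).im| ≤ |x₀.im| + 2^k/2 + ε := by
        have t1 : |(gctr k n m).im - z'.im| = |z'.im - (gctr k n m).im| := abs_sub_comm _ _
        have t2 := abs_add_le ((gctr k n m).im - z'.im) (z'.im - x₀.im)
        have t3 := abs_add_le ((gctr k n m).im - x₀.im) x₀.im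
        simp only [sub_add_cancel, sub_add_sub_cancel] at t2 t3
        linarith
      have h8 := abs_add_le (((m:ℝ)+2⁻¹)*2^k) (-(2^k/2))
      have e8 : ((m:ℝ)+2⁻¹)*2^k + -(2^k/2) = (m:ℝ)*2^k := by ring
      rw [e8, abs_neg, abs_of_pos (by positivity : (0:ℝ) < 2^k/2)] at h8
      have h9 : |(m:ℝ)| * 2^k ≤ |x₀.im| + ε + 2^k := by
        have : |(m:ℝ) * 2^k| = |(m:ℝ)| * 2^k := by
          rw [abs_mul, abs_of_pos hp]
        rw [gctr_im] at h5
        linarith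
      by_cases hcase : (1:ℝ) ≤ |(m:ℝ)|
      · have h10 : (|(m:ℝ)| - 1) * h₁ ≤ (|(m:ℝ)| - 1) * 2^k :=
          mul_le_mul_of_nonneg_left hk (by linarith)
        rw [hBdef, le_div_iff₀ hh₁]
        nlinarith [abs_nonneg x₀.re, abs_nonneg x₀.im]
      · rw [hBdef, le_div_iff₀ hh₁]
        nlinarith [abs_nonneg x₀.re, abs_nonneg x₀.im]
  have hsub : {p : ℤ×ℤ×ℤ | Sel C Bad p ∧ h₁ ≤ 2^p.1 ∧
      (gRect p.1 p.2.1 p.2.2 ∩ ball x₀ ε).Nonempty} ⊆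
      (Set.Icc (Int.log 2 h₁) (Int.log 2 H)) ×ˢ
        ((Set.Icc (-⌈B⌉) ⌈B⌉) ×ˢ (Set.Icc (-⌈B⌉) ⌈B⌉)) := by
    rintro ⟨k, n, m⟩ ⟨hsel, hk, hne⟩
    obtain ⟨⟨hk1, hk2⟩, hn, hm⟩ := key (k,n,m) hsel hk hne
    have hBceil : B ≤ (⌈B⌉ : ℝ) := Int.le_ceil B
    have hn' : -⌈B⌉ ≤ n ∧ n ≤ ⌈B⌉ := by
      have h := abs_le.mp (hn.trans hBceil)
      constructor
      · exact_mod_cast h.1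
      · exact_mod_cast h.2
    have hm' : -⌈B⌉ ≤ m ∧ m ≤ ⌈B⌉ := by
      have h := abs_le.mp (hm.trans hBceil)
      constructor
      · exact_mod_cast h.1
      · exact_mod_cast h.2
    exact ⟨⟨hk1, hk2⟩, ⟨hn'.1, hn'.2⟩, ⟨hm'.1, hm'.2⟩⟩
  exact Set.Finite.subset
    ((Set.finite_Icc _ _).prod ((Set.finite_Icc _ _).prod (Set.finite_Icc _ _))) hsub

lemma NSet_empty (hC : C = ∅) : NSet C Bad = ∅ := by
  ext z
  simp only [NSet, Set.mem_setOf_eq, Set.mem_empty_iff_false, iff_false]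
  rintro ⟨p, ⟨⟨y, hy, -⟩, -⟩, -⟩
  rw [hC] at hy
  exact hy

lemma gRect_subset_NSet {p : ℤ×ℤ×ℤ} (hsel : Sel C Bad p) :
    gRect p.1 p.2.1 p.2.2 ⊆ NSet C Bad := fun z hz => ⟨p, hsel, hz⟩

/-- lower bound for sides of selected squares meeting a ball far from C -/
lemma side_lb {z : ℂ} {t : ℝ} (htz : ∀ y ∈ C, t ≤ dist z y) {p : ℤ×ℤ×ℤ}
    (hsel : Sel C Bad p) (hne : (gRect p.1 p.2.1 p.2.2 ∩ ball z (t/2)).Nonempty) :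
    t/6 ≤ 2^p.1 := by
  obtain ⟨w, hwg, hwb⟩ := hne
  obtain ⟨⟨y, hyC, hyc⟩, -⟩ := hsel
  have hp := zpow_pos' p.1
  have h1 : dist w y ≤ 3 * 2^p.1 := by
    have t1 := dist_triangle w (gctr p.1 p.2.1 p.2.2) y
    have t2 := dist_gctr_le hwg
    have t3 : dist (gctr p.1 p.2.1 p.2.2) y = dist y (gctr p.1 p.2.1 p.2.2) := dist_comm _ _
    linarith
  have h2 : dist z w < t/2 := by
    have := mem_ball.mp hwb
    rwa [dist_comm] at this
  have h3 := htz y hyC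
  have h4 := dist_triangle z w y
  linarith

lemma isClosed_NSet (hCcl : IsClosed C) (hCN : C ⊆ NSet C Bad) (hBadne : Bad.Nonempty) :
    IsClosed (NSet C Bad) := by
  rcases eq_empty_or_nonempty C with hCe | hCne
  · rw [NSet_empty hCe]
    exact isClosed_empty
  rw [← isOpen_compl_iff]
  rw [Metric.isOpen_iff]
  intro z hz
  have hzC : z ∉ C := fun h => hz (hCN h)
  have ht : 0 < infDist z C := (hCcl.notMem_iff_infDist_pos hCne).mp hzC
  set t : ℝ := infDist z C with htdef
  have htz : ∀ y ∈ C, t ≤ dist z y := fun y hy => infDist_le_dist_of_mem hy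
  have hfin := sel_finite (C := C) hBadne z (ε := t/2) (by positivity : (0:ℝ) < t/6)
  set T : Finset ℝ := hfin.toFinset.image
    (fun p => infDist z (gRect p.1 p.2.1 p.2.2)) with hTdef
  have hmem𝒮 : ∀ p : ℤ×ℤ×ℤ, Sel C Bad p → (gRect p.1 p.2.1 p.2.2 ∩ ball z (t/2)).Nonempty →
      infDist z (gRect p.1 p.2.1 p.2.2) ∈ T := by
    intro p hsel hne
    rw [hTdef]
    apply Finset.mem_image_of_mem
    rw [Set.Finite.mem_toFinset]
    exact ⟨hsel, side_lb htz hsel hne, hne⟩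
  have hTpos : ∀ r ∈ T, 0 < r := by
    intro r hr
    rw [hTdef, Finset.mem_image] at hr
    obtain ⟨p, hp, rfl⟩ := hr
    rw [Set.Finite.mem_toFinset] at hp
    have hzg : z ∉ gRect p.1 p.2.1 p.2.2 := fun h => hz (gRect_subset_NSet hp.1 h)
    exact ((isClosed_Rect _).notMem_iff_infDist_pos ⟨_, gctr_mem_gRect _ _ _⟩).mp hzg
  by_cases hT : T.Nonempty
  · refine ⟨min (t/2) (T.min' hT), lt_min (by positivity) (hTpos _ (T.min'_mem hT)), ?_⟩
    intro w hw
    intro hwN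
    obtain ⟨p, hsel, hwp⟩ := hwN
    have hwb : w ∈ ball z (t/2) := mem_ball.mpr (lt_of_lt_of_le (mem_ball.mp hw) (min_le_left _ _))
    have hmem := hmem𝒮 p hsel ⟨w, hwp, hwb⟩
    have h1 : infDist z (gRect p.1 p.2.1 p.2.2) ≤ dist z w := infDist_le_dist_of_mem hwp
    have h2 : T.min' hT ≤ infDist z (gRect p.1 p.2.1 p.2.2) := T.min'_le _ hmem
    have h3 : dist w z < T.min' hT := lt_of_lt_of_le (mem_ball.mp hw) (min_le_right _ _)
    rw [dist_comm] at h3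
    linarith
  · refine ⟨t/2, by positivity, ?_⟩
    intro w hw hwN
    obtain ⟨p, hsel, hwp⟩ := hwN
    exact hT ⟨_, hmem𝒮 p hsel ⟨w, hwp, hw⟩⟩

/-! ### Cells of a finite family of rectangles -/

lemma convex_comb_lt {v x y a b : ℝ} (hx : v < x) (hy : v < y) (ha : 0 ≤ a) (hb : 0 ≤ b)
    (hab : a + b = 1) : v < a*x + b*y := by
  rcases eq_or_lt_of_le ha with h | h
  · have hb1 : b = 1 := by linarith
    rw [← h, hb1]
    simpa using hy
  · have hv : a*v + b*v = v := by rw [← add_mul, hab, one_mul]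
    nlinarith [mul_le_mul_of_nonneg_left hy.le hb, mul_lt_mul_of_pos_left hx h]

lemma convex_comb_lt' {v x y a b : ℝ} (hx : x < v) (hy : y < v) (ha : 0 ≤ a) (hb : 0 ≤ b)
    (hab : a + b = 1) : a*x + b*y < v := by
  have := convex_comb_lt (v := -v) (x := -x) (y := -y) (by linarith) (by linarith) ha hb hab
  nlinarith

open scoped Classical in
noncomputable def Xset (R : Finset (ℝ × ℝ × ℝ × ℝ)) : Finset ℝ :=
  R.image (fun r => r.1) ∪ R.image (fun r => r.2.1)

open scoped Classical in
noncomputable def Yset (R : Finset (ℝ × ℝ × ℝ × ℝ)) : Finset ℝ :=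
  R.image (fun r => r.2.2.1) ∪ R.image (fun r => r.2.2.2)

open scoped Classical in
noncomputable def IdxOf (R : Finset (ℝ × ℝ × ℝ × ℝ)) (w : ℂ) : Finset ℝ × Finset ℝ :=
  ((Xset R).filter (fun v => v < w.re), (Yset R).filter (fun v => v < w.im))

def CellOf (R : Finset (ℝ × ℝ × ℝ × ℝ)) (w : ℂ) : Set ℂ :=
  {u : ℂ | (∀ v ∈ Xset R, v < w.re → v < u.re) ∧ (∀ v ∈ Xset R, w.re < v → u.re < v) ∧
           (∀ v ∈ Yset R, v < w.im → v < u.im) ∧ (∀ v ∈ Yset R, w.im < v → u.im < v)}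

lemma self_mem_CellOf (R : Finset (ℝ × ℝ × ℝ × ℝ)) (w : ℂ) : w ∈ CellOf R w :=
  ⟨fun _ _ h => h, fun _ _ h => h, fun _ _ h => h, fun _ _ h => h⟩

lemma convex_CellOf (R : Finset (ℝ × ℝ × ℝ × ℝ)) (w : ℂ) : Convex ℝ (CellOf R w) := by
  intro x hx y hy a b ha hb hab
  have hre : (a • x + b • y).re = a * x.re + b * y.re := by
    simp [Complex.add_re, Complex.smul_re]
  have him : (a • x + b • y).im = a * x.im + b * y.im := by
    simp [Complex.add_im, Complex.smul_im]
  refine ⟨?_, ?_, ?_, ?_⟩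
  · intro v hv hvw
    rw [hre]
    exact convex_comb_lt (hx.1 v hv hvw) (hy.1 v hv hvw) ha hb hab
  · intro v hv hvw
    rw [hre]
    exact convex_comb_lt' (hx.2.1 v hv hvw) (hy.2.1 v hv hvw) ha hb hab
  · intro v hv hvw
    rw [him]
    exact convex_comb_lt (hx.2.2.1 v hv hvw) (hy.2.2.1 v hv hvw) ha hb hab
  · intro v hv hvw
    rw [him]
    exact convex_comb_lt' (hx.2.2.2 v hv hvw) (hy.2.2.2 v hv hvw) ha hb hab

lemma mem_CellOf_of_idx_eq {R : Finset (ℝ × ℝ × ℝ × ℝ)} {w₁ w₂ : ℂ}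
    (h2 : w₂.re ∉ Xset R) (h4 : w₂.im ∉ Yset R)
    (hidx : IdxOf R w₁ = IdxOf R w₂) : w₂ ∈ CellOf R w₁ := by
  classical
  have hX : ∀ v ∈ Xset R, (v < w₁.re ↔ v < w₂.re) := by
    intro v hv
    have := congrArg Prod.fst hidx
    simp only [IdxOf] at this
    constructor
    · intro h
      have hv1 : v ∈ (Xset R).filter (fun v => v < w₁.re) := Finset.mem_filter.mpr ⟨hv, h⟩
      rw [this] at hv1
      exact (Finset.mem_filter.mp hv1).2
    · intro h
      have hv1 : v ∈ (Xset R).filter (fun v => v < w₂.re) := Finset.mem_filter.mpr ⟨hv, h⟩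
      rw [← this] at hv1
      exact (Finset.mem_filter.mp hv1).2
  have hY : ∀ v ∈ Yset R, (v < w₁.im ↔ v < w₂.im) := by
    intro v hv
    have := congrArg Prod.snd hidx
    simp only [IdxOf] at this
    constructor
    · intro h
      have hv1 : v ∈ (Yset R).filter (fun v => v < w₁.im) := Finset.mem_filter.mpr ⟨hv, h⟩
      rw [this] at hv1
      exact (Finset.mem_filter.mp hv1).2
    · intro h
      have hv1 : v ∈ (Yset R).filter (fun v => v < w₂.im) := Finset.mem_filter.mpr ⟨hv, h⟩
      rw [← this] at hv1
      exact (Finset.mem_filter.mp hv1).2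
  refine ⟨?_, ?_, ?_, ?_⟩
  · intro v hv h
    exact (hX v hv).mp h
  · intro v hv h
    have h1 : ¬ (v < w₂.re) := fun hc => (by linarith [(hX v hv).mpr hc] : False)
    have h2' : v ≠ w₂.re := fun hc => h2 (hc ▸ hv)
    rcases lt_or_eq_of_le (not_lt.mp h1) with h' | h'
    · exact h'
    · exact absurd h'.symm h2'
  · intro v hv h
    exact (hY v hv).mp h
  · intro v hv h
    have h1 : ¬ (v < w₂.im) := fun hc => (by linarith [(hY v hv).mpr hc] : False)
    have h4' : v ≠ w₂.im := fun hc => h4 (hc ▸ hv)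
    rcases lt_or_eq_of_le (not_lt.mp h1) with h' | h'
    · exact h'
    · exact absurd h'.symm h4'

lemma mem_Rect_of_cell {R : Finset (ℝ × ℝ × ℝ × ℝ)} {w u : ℂ} {r : ℝ × ℝ × ℝ × ℝ}
    (hr : r ∈ R) (hwX : w.re ∉ Xset R) (hwY : w.im ∉ Yset R)
    (hu : u ∈ CellOf R w) (hur : u ∈ Rect r) : w ∈ Rect r := by
  classical
  have ha : r.1 ∈ Xset R := Finset.mem_union_left _ (Finset.mem_image_of_mem _ hr)
  have hb : r.2.1 ∈ Xset R := Finset.mem_union_right _ (Finset.mem_image_of_mem _ hr)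
  have hc : r.2.2.1 ∈ Yset R := Finset.mem_union_left _ (Finset.mem_image_of_mem _ hr)
  have hd : r.2.2.2 ∈ Yset R := Finset.mem_union_right _ (Finset.mem_image_of_mem _ hr)
  obtain ⟨hu1, hu2, hu3, hu4⟩ := hur
  refine ⟨?_, ?_, ?_, ?_⟩
  · by_contra h
    push_neg at h
    exact absurd hu1 (not_le.mpr (hu.2.1 _ ha h))
  · by_contra h
    push_neg at h
    exact absurd hu2 (not_le.mpr (hu.1 _ hb h))
  · by_contra h
    push_neg at h
    exact absurd hu3 (not_le.mpr (hu.2.2.2 _ hc h))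
  · by_contra h
    push_neg at h
    exact absurd hu4 (not_le.mpr (hu.2.2.1 _ hd h))

/-- perturb a point of an open set to have generic coordinates, staying joined inside. -/
lemma exists_perturb (R : Finset (ℝ × ℝ × ℝ × ℝ)) {Ω : Set ℂ} (hΩ : IsOpen Ω) {p : ℂ}
    (hp : p ∈ Ω) : ∃ w ∈ Ω, w.re ∉ Xset R ∧ w.im ∉ Yset R ∧ segment ℝ p w ⊆ Ω := by
  obtain ⟨δ, hδ, hball⟩ := Metric.isOpen_iff.mp hΩ p hp
  have hfin1 : {u : ℝ | p.re + u ∈ (Xset R : Set ℝ)}.Finite := by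
    have : {u : ℝ | p.re + u ∈ (Xset R : Set ℝ)} = (fun u => p.re + u) ⁻¹' (Xset R : Set ℝ) := rfl
    rw [this]
    exact Set.Finite.preimage ((add_right_injective p.re).injOn) (Xset R).finite_toSet
  have hfin2 : {u : ℝ | p.im + u ∈ (Yset R : Set ℝ)}.Finite := by
    have : {u : ℝ | p.im + u ∈ (Yset R : Set ℝ)} = (fun u => p.im + u) ⁻¹' (Yset R : Set ℝ) := rfl
    rw [this]
    exact Set.Finite.preimage ((add_right_injective p.im).injOn) (Yset R).finite_toSet
  obtain ⟨u, hu⟩ := ((Set.Ioo_infinite (by linarith : (0:ℝ) < δ/2)).diff hfin1).nonempty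
  obtain ⟨v, hv⟩ := ((Set.Ioo_infinite (by linarith : (0:ℝ) < δ/2)).diff hfin2).nonempty
  obtain ⟨⟨hu1, hu2⟩, hu3⟩ := hu
  obtain ⟨⟨hv1, hv2⟩, hv3⟩ := hv
  set w : ℂ := ⟨p.re + u, p.im + v⟩ with hwdef
  have hwre : w.re = p.re + u := rfl
  have hwim : w.im = p.im + v := rfl
  have hwdist : dist w p < δ := by
    rw [Complex.dist_eq]
    have h1 : (w - p).re = u := by rw [Complex.sub_re, hwre]; ring
    have h2 : (w - p).im = v := by rw [Complex.sub_im, hwim]; ring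
    calc ‖w - p‖ ≤ |(w-p).re| + |(w-p).im| := Complex.norm_le_abs_re_add_abs_im _
      _ = |u| + |v| := by rw [h1, h2]
      _ < δ := by rw [abs_of_pos hu1, abs_of_pos hv1]; linarith
  have hwb : w ∈ ball p δ := mem_ball.mpr hwdist
  refine ⟨w, hball hwb, fun h => hu3 (by rwa [hwre] at h), fun h => hv3 (by rwa [hwim] at h), ?_⟩
  exact ((convex_ball p δ).segment_subset (mem_ball_self hδ) hwb).trans hball

/-- clopen absorption: a preconnected subset of `A` meeting a set `c` that is
clopen-in-`A` is contained in `c`. -/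
lemma absorb {A c σ : Set ℂ} (hA : IsOpen A) (hc : IsOpen c)
    (hclop : closure c ∩ A ⊆ c) (hσ : IsPreconnected σ) (hσA : σ ⊆ A)
    (hne : (σ ∩ c).Nonempty) : σ ⊆ c := by
  refine IsPreconnected.subset_left_of_subset_union (v := A ∩ (closure c)ᶜ) hc
    (hA.inter isClosed_closure.isOpen_compl) ?_ ?_ hne hσ
  · exact Set.disjoint_left.mpr fun z hz hz2 => hz2.2 (subset_closure hz)
  · intro z hz
    by_cases h : z ∈ c
    · exact Or.inl h
    · exact Or.inr ⟨hσA hz, fun hcl => h (hclop ⟨hcl, hσA hz⟩)⟩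

lemma Rect_subset_closedBall (y : ℂ) (d : ℝ) :
    Rect (y.re - d, y.re + d, y.im - d, y.im + d) ⊆ closedBall y (2*d) := by
  rintro z ⟨h1, h2, h3, h4⟩
  simp only at h1 h2 h3 h4
  rw [mem_closedBall, Complex.dist_eq]
  calc ‖z - y‖ ≤ |(z - y).re| + |(z - y).im| := Complex.norm_le_abs_re_add_abs_im _
    _ ≤ d + d := by
        rw [Complex.sub_re, Complex.sub_im]
        refine add_le_add (abs_le.mpr ⟨by linarith, by linarith⟩)
          (abs_le.mpr ⟨by linarith, by linarith⟩)
    _ = 2*d := by ring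

lemma ball_subset_Rect (y : ℂ) (d : ℝ) :
    ball y d ⊆ Rect (y.re - d, y.re + d, y.im - d, y.im + d) := by
  intro z hz
  have h1 : |z.re - y.re| ≤ dist z y := abs_re_diff_le_dist _ _
  have h2 : |z.im - y.im| ≤ dist z y := by
    rw [Complex.dist_eq, ← Complex.sub_im]
    exact Complex.abs_im_le_norm _
  have hd : dist z y < d := mem_ball.mp hz
  obtain ⟨h1a, h1b⟩ := abs_le.mp (le_of_lt (lt_of_le_of_lt h1 hd))
  obtain ⟨h2a, h2b⟩ := abs_le.mp (le_of_lt (lt_of_le_of_lt h2 hd))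
  exact ⟨by simp only; linarith, by simp only; linarith, by simp only; linarith,
    by simp only; linarith⟩

end ArakAux

open ArakAux in
theorem bounded_iff_exists_arakeljan_superset
    (G : Set ℂ) (hGopen : IsOpen G) (hGconn : IsConnected G)
    (f : ℂ → ℂ) (hf : DifferentiableOn ℂ f G)
    (C : Set ℂ) (hCG : C ⊆ G) (hCclosed : IsClosed C) :
    (∃ M : ℝ, ∀ z ∈ C, ‖f z‖ ≤ M) ↔
      ∃ C₁ : Set ℂ, C₁ ⊆ G ∧ IsClosed C₁ ∧ IsArakeljan G C₁ ∧ C ⊆ C₁ ∧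
        ∃ M : ℝ, ∀ z ∈ C₁, ‖f z‖ ≤ M := by
  constructor
  · rintro ⟨M, hM⟩
    classical
    set Bad : Set ℂ := {z | z ∈ G ∧ M + 1 < ‖f z‖} ∪ Gᶜ with hBaddef
    have hBadspec : ∀ z : ℂ, z ∉ Bad → z ∈ G ∧ ‖f z‖ ≤ M + 1 := by
      intro z hz
      have hzG : z ∈ G := by
        by_contra h
        exact hz (Or.inr h)
      refine ⟨hzG, ?_⟩
      by_contra h
      exact hz (Or.inl ⟨hzG, not_le.mp h⟩)
    rcases Set.eq_empty_or_nonempty Bad with hBade | hBadne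
    · -- trivial case : `G = ℂ` and `f` globally bounded
      rw [Set.eq_empty_iff_forall_notMem] at hBade
      have hGuniv : G = univ := by
        rw [Set.eq_univ_iff_forall]
        intro z
        by_contra h
        exact hBade z (Or.inr h)
      have hbd : ∀ z ∈ (univ : Set ℂ), ‖f z‖ ≤ M + 1 := fun z _ =>
        (hBadspec z (hBade z)).2
      refine ⟨univ, by rw [hGuniv], isClosed_univ, ⟨?_, ?_⟩, subset_univ _, M+1, hbd⟩
      · rintro g ⟨⟨z, hz, -⟩, -⟩
        exact hz.2 (mem_univ z)
      · intro K hK _ _ _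
        refine ⟨∅, isCompact_empty, empty_subset _, ?_⟩
        intro z hz
        simp only [Set.mem_iUnion, Set.mem_setOf_eq, exists_prop] at hz
        obtain ⟨g, ⟨⟨w, hw, -⟩, -⟩, -⟩ := hz
        exact absurd (Or.inl (mem_univ w)) hw.2
    · -- main case
      have hfarC : ∀ y ∈ C, ∃ r, 0 < r ∧ ∀ b ∈ Bad, r ≤ dist b y := by
        intro y hy
        have hyG : y ∈ G := hCG hy
        have h1 : ContinuousAt (fun z => ‖f z‖) y :=
          continuous_norm.continuousAt.comp
            (hf.continuousOn.continuousAt (hGopen.mem_nhds hyG))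
        have hlt : ‖f y‖ < M + 1 := lt_of_le_of_lt (hM y hy) (by linarith)
        have h2 : {z : ℂ | ‖f z‖ < M + 1} ∈ nhds y := h1 (Iio_mem_nhds hlt)
        have h3 : G ∩ {z : ℂ | ‖f z‖ < M + 1} ∈ nhds y :=
          Filter.inter_mem (hGopen.mem_nhds hyG) h2
        obtain ⟨r, hr, hball⟩ := Metric.mem_nhds_iff.mp h3
        refine ⟨r, hr, ?_⟩
        intro b hb
        by_contra h
        push_neg at h
        have hbmem := hball (mem_ball.mpr h)
        rcases hb with ⟨-, hb2⟩ | hb2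
        · exact absurd hbmem.2 (not_lt.mpr (le_of_lt hb2))
        · exact hb2 hbmem.1
      have hCsubN : C ⊆ NSet C Bad := by
        intro y hy
        obtain ⟨r, hr, hfar⟩ := hfarC y hy
        refine mem_NSet_of_near_far hy (t := r/100000) (by positivity) ?_ ?_
        · rw [dist_self]
          positivity
        · intro b hb
          have h := hfar b hb
          calc (100000:ℝ) * (r/100000) = r := by ring
            _ ≤ dist b y := h
      set N : Set ℂ := NSet C Bad with hNdef
      have hNbad : ∀ z ∈ N, z ∉ Bad := fun z hz => not_bad_of_mem_NSet hz
      have hNsubG : N ⊆ G := fun z hz => (hBadspec z (hNbad z hz)).1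
      have hNbd : ∀ z ∈ N, ‖f z‖ ≤ M + 1 := fun z hz => (hBadspec z (hNbad z hz)).2
      have hNcl : IsClosed N := isClosed_NSet hCclosed hCsubN hBadne
      set D : Set ℂ := Fill G N with hDdef
      have hDcl : IsClosed D := isClosed_Fill hGopen hNcl
      have hDsubG : D ⊆ G := Fill_subset hNsubG
      have hDbd : ∀ z ∈ D, ‖f z‖ ≤ M + 1 := abs_le_Fill hGopen hf hNcl hNbd
      have hNsubD : N ⊆ D := subset_Fill G N
      have hCD : C ⊆ D := fun z hz => hNsubD (hCsubN hz)
      have hDnoholes : ∀ g, ¬ IsGHole G D g := no_holes_Fill hGopen hNcl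
      refine ⟨D, hDsubG, hDcl, ⟨hDnoholes, ?_⟩, hCD, M+1, hDbd⟩
      intro K hK _ hKG _
      -- ### construct the rectangle cover `Q` of `K`
      have hcov : ∀ y : ℂ, y ∈ K → ∃ d, 0 < d ∧ closedBall y (2*d) ⊆ G := by
        intro y hy
        obtain ⟨δ', hδ', hb⟩ := Metric.isOpen_iff.mp hGopen y (hKG hy)
        exact ⟨δ'/4, by linarith, (closedBall_subset_ball (by linarith)).trans hb⟩
      choose! δK hδKpos hδKsub using hcov
      obtain ⟨T, hT⟩ := hK.elim_finite_subcover (fun y : ↥K => ball (y:ℂ) (δK y))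
        (fun _ => isOpen_ball)
        (by intro z hz
            exact Set.mem_iUnion.mpr ⟨⟨z, hz⟩, mem_ball_self (hδKpos z hz)⟩)
      set rq : ↥K → ℝ × ℝ × ℝ × ℝ := fun y =>
        ((y:ℂ).re - δK y, (y:ℂ).re + δK y, (y:ℂ).im - δK y, (y:ℂ).im + δK y) with hrqdef
      set RQ : Finset (ℝ × ℝ × ℝ × ℝ) := T.image rq with hRQdef
      set Q : Set ℂ := ⋃ r ∈ RQ, Rect r with hQdef
      have hRQy : ∀ r ∈ RQ, ∃ y : ↥K, r = rq y := by
        intro r hr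
        rw [hRQdef] at hr
        obtain ⟨y, -, rfl⟩ := Finset.mem_image.mp hr
        exact ⟨y, rfl⟩
      have hRQG : ∀ r ∈ RQ, Rect r ⊆ G := by
        intro r hr
        obtain ⟨y, rfl⟩ := hRQy r hr
        exact (Rect_subset_closedBall (y:ℂ) (δK y)).trans (hδKsub y y.2)
      have hQG : Q ⊆ G := Set.iUnion₂_subset hRQG
      have hQcl : IsClosed Q :=
        Set.Finite.isClosed_biUnion RQ.finite_toSet (fun r _ => isClosed_Rect r)
      have hQcpt : IsCompact Q := by
        rw [hQdef]
        refine Set.Finite.isCompact_biUnion RQ.finite_toSet ?_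
        intro r hr
        obtain ⟨y, rfl⟩ := hRQy r hr
        exact (isCompact_closedBall (y:ℂ) (2*δK y)).of_isClosed_subset (isClosed_Rect _)
          (Rect_subset_closedBall (y:ℂ) (δK y))
      have hKQ : K ⊆ Q := by
        intro z hz
        have hz2 := hT hz
        simp only [Set.mem_iUnion] at hz2
        obtain ⟨y, hyT, hzy⟩ := hz2
        rw [hQdef]
        refine Set.mem_biUnion (Finset.mem_image_of_mem rq hyT) ?_
        exact ball_subset_Rect (y:ℂ) (δK y) hzy
      have hDQcl : IsClosed (D ∪ Q) := hDcl.union hQcl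
      -- ### every hole of `D ∪ Q` touches `Q`
      have htouch : ∀ c : Set ℂ, IsGHole G (D ∪ Q) c → (closure c ∩ Q).Nonempty := by
        intro c hc
        by_contra hemp
        rw [Set.not_nonempty_iff_eq_empty] at hemp
        have hfr : frontier c ⊆ D ∪ Q := frontier_hole_subset hGopen hDQcl hc
        have hfrD : frontier c ⊆ D := by
          intro z hz
          rcases hfr hz with h | h
          · exact h
          · exfalso
            have hmem : z ∈ closure c ∩ Q := ⟨hz.1, h⟩
            rw [hemp] at hmem
            exact Set.notMem_empty z hmem
        obtain ⟨⟨z, hzmem, hceq⟩, L, hL, hLG, hcL⟩ := id hc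
        have hzD : z ∈ G \ D := ⟨hzmem.1, fun h => hzmem.2 (Or.inl h)⟩
        have hcopen : IsOpen c := by
          rw [hceq]
          exact (hGopen.sdiff hDQcl).connectedComponentIn
        have hcsubGD : c ⊆ G \ D := by
          rw [hceq]
          exact (connectedComponentIn_subset _ _).trans
            (fun p hp => ⟨hp.1, fun h => hp.2 (Or.inl h)⟩)
        have hclop : closure c ∩ (G \ D) ⊆ c := by
          intro w hw
          rcases (closure_eq_self_union_frontier c ▸ hw.1) with h | h
          · exact h
          · exact absurd (hfrD h) hw.2.2
        have hzc : z ∈ c := by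
          rw [hceq]
          exact mem_connectedComponentIn hzmem
        have h1 : connectedComponentIn (G \ D) z ⊆ c :=
          absorb (hGopen.sdiff hDcl) hcopen hclop isPreconnected_connectedComponentIn
            (connectedComponentIn_subset _ _) ⟨z, mem_connectedComponentIn hzD, hzc⟩
        have hcpre : IsPreconnected c := by
          rw [hceq]
          exact isPreconnected_connectedComponentIn
        have h2 : c ⊆ connectedComponentIn (G \ D) z :=
          hcpre.subset_connectedComponentIn hzc hcsubGD
        have heq : connectedComponentIn (G \ D) z = c := subset_antisymm h1 h2
        refine hDnoholes (connectedComponentIn (G \ D) z)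
          ⟨⟨z, hzD, rfl⟩, L, hL, hLG, ?_⟩
        rw [heq]
        exact hcL
      -- ### locally, only finitely many holes of `D ∪ Q` (the core pigeonhole)
      -- joining engine: a preconnected set in `G \ (N ∪ Q)` meeting a hole of `D ∪ Q`
      -- is contained in that hole
      have hjoin : ∀ σ : Set ℂ, IsPreconnected σ → σ ⊆ G \ (N ∪ Q) →
          ∀ c : Set ℂ, IsGHole G (D ∪ Q) c → ∀ z₁ ∈ σ, z₁ ∈ c → σ ⊆ c := by
        intro σ hσpre hσsub c hc z₁ hz₁σ hz₁c
        have hz₁GD : z₁ ∈ G \ (D ∪ Q) := by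
          obtain ⟨⟨w0, hw0, hceq'⟩, -⟩ := id hc
          have h := hz₁c
          rw [hceq'] at h
          exact connectedComponentIn_subset _ _ h
        have hσD : σ ⊆ G \ (D ∪ Q) := by
          intro z hz
          refine ⟨(hσsub hz).1, ?_⟩
          rintro (hD | hQ')
          · rcases hD with hN | ⟨h, hh, hzh⟩
            · exact (hσsub hz).2 (Or.inl hN)
            · have hhopen : IsOpen h := by
                obtain ⟨⟨w0, hw0, rfl⟩, -⟩ := id hh
                exact (hGopen.sdiff hNcl).connectedComponentIn
              have hhclop : closure h ∩ (G \ N) ⊆ h := by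
                intro w hw
                rcases (closure_eq_self_union_frontier h ▸ hw.1) with h' | h'
                · exact h'
                · exact absurd (frontier_hole_subset hGopen hNcl hh h') hw.2.2
              have hσh : σ ⊆ h := absorb (hGopen.sdiff hNcl) hhopen hhclop hσpre
                  (fun w hw => ⟨(hσsub hw).1, fun hN => (hσsub hw).2 (Or.inl hN)⟩)
                  ⟨z, hz, hzh⟩
              exact hz₁GD.2 (Or.inl (Or.inr ⟨h, hh, hσh hz₁σ⟩))
          · exact (hσsub hz).2 (Or.inr hQ')
        obtain ⟨hz₁mem, hceq⟩ := hole_eq_cci hc hz₁c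
        rw [hceq]
        exact hσpre.subset_connectedComponentIn hz₁σ hσD
      have perq : ∀ q ∈ Q, ∃ ε, 0 < ε ∧
          {c : Set ℂ | IsGHole G (D ∪ Q) c ∧ (c ∩ ball q ε).Nonempty}.Finite := by
        intro q hq
        have hqG : q ∈ G := hQG hq
        obtain ⟨ε₀, hε₀, hballG⟩ := Metric.isOpen_iff.mp hGopen q hqG
        by_cases hqC : q ∈ C
        · -- Case A: a small ball around `q` lies inside `N`; no hole can meet it
          obtain ⟨r, hr, hfar⟩ := hfarC q hqC
          have hεpos : (0:ℝ) < min ε₀ (r / 200000) := lt_min hε₀ (by positivity)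
          refine ⟨min ε₀ (r / 200000), hεpos, ?_⟩
          have hballN : ball q (min ε₀ (r / 200000)) ⊆ N := by
            intro z hz
            have h3 : dist z q < min ε₀ (r / 200000) := mem_ball.mp hz
            have h4 : min ε₀ (r / 200000) ≤ r/200000 := min_le_right _ _
            refine mem_NSet_of_near_far hqC (t := min ε₀ (r / 200000)) hεpos ?_ ?_
            · rw [dist_comm] at h3
              rw [dist_comm]
              linarith
            · intro b hb
              have h1 := hfar b hb
              have h2 := dist_triangle b z q
              linarith
          refine Set.Finite.subset Set.finite_empty ?_
          rintro c ⟨hc, w, hwc, hwb⟩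
          exfalso
          obtain ⟨⟨z0, hz0, hceq⟩, -⟩ := id hc
          have hwmem : w ∈ G \ (D ∪ Q) := by
            have h := hwc
            rw [hceq] at h
            exact connectedComponentIn_subset _ _ h
          exact hwmem.2 (Or.inl (hNsubD (hballN hwb)))
        · -- Case B: the pigeonhole via cells
          obtain ⟨ρ, hρ, hρC⟩ : ∃ ρ, 0 < ρ ∧ ∀ y ∈ C, ρ ≤ dist q y := by
            rcases Set.eq_empty_or_nonempty C with hCe | hCne
            · exact ⟨1, one_pos, fun y hy => absurd (hCe ▸ hy) (Set.notMem_empty y)⟩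
            · exact ⟨infDist q C, (hCclosed.notMem_iff_infDist_pos hCne).mp hqC,
                fun y hy => infDist_le_dist_of_mem hy⟩
          set ε : ℝ := min ε₀ (ρ/2) with hεdef
          have hεpos : 0 < ε := lt_min hε₀ (by positivity)
          have h𝒮fin := sel_finite (C := C) (Bad := Bad) hBadne q (ε := ρ/2)
            (h₁ := ρ/6) (by positivity)
          set RectFam : Finset (ℝ×ℝ×ℝ×ℝ) := RQ ∪ (h𝒮fin.toFinset.image
            (fun p : ℤ×ℤ×ℤ => ((p.2.1:ℝ) * 2^p.1, ((p.2.1:ℝ)+1) * 2^p.1,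
              (p.2.2:ℝ) * 2^p.1, ((p.2.2:ℝ)+1) * 2^p.1))) with hRFdef
          have hgRect_eq : ∀ p : ℤ×ℤ×ℤ, gRect p.1 p.2.1 p.2.2 =
              Rect ((p.2.1:ℝ) * 2^p.1, ((p.2.1:ℝ)+1) * 2^p.1,
                (p.2.2:ℝ) * 2^p.1, ((p.2.2:ℝ)+1) * 2^p.1) := fun p => rfl
          have hcover : (N ∪ Q) ∩ ball q ε ⊆ ⋃ r ∈ RectFam, Rect r := by
            rintro z ⟨hz1 | hz1, hzb⟩
            · obtain ⟨p, hsel, hzp⟩ := hz1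
              have hball2 : z ∈ ball q (ρ/2) := by
                have := mem_ball.mp hzb
                have h4 : ε ≤ ρ/2 := min_le_right _ _
                exact mem_ball.mpr (by linarith)
              have hp𝒮 : p ∈ h𝒮fin.toFinset := by
                rw [Set.Finite.mem_toFinset]
                exact ⟨hsel, side_lb hρC hsel ⟨z, hzp, hball2⟩, ⟨z, hzp, hball2⟩⟩
              refine Set.mem_biUnion
                (Finset.mem_union_right _ (Finset.mem_image_of_mem _ hp𝒮)) ?_
              rw [← hgRect_eq p]
              exact hzp
            · rw [hQdef] at hz1
              simp only [Set.mem_iUnion, exists_prop] at hz1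
              obtain ⟨r, hr, hzr⟩ := hz1
              exact Set.mem_biUnion (Finset.mem_union_left _ hr) hzr
          set Ω : Set ℂ := ball q ε \ ⋃ r ∈ RectFam, Rect r with hΩdef
          have hΩopen : IsOpen Ω := isOpen_ball.sdiff
            (Set.Finite.isClosed_biUnion RectFam.finite_toSet (fun r _ => isClosed_Rect r))
          have hballG' : ball q ε ⊆ G := (ball_subset_ball (min_le_left _ _)).trans hballG
          have hΩND : Ω ⊆ G \ (N ∪ Q) := fun z hz =>
            ⟨hballG' hz.1, fun hNQ => hz.2 (hcover ⟨hNQ, hz.1⟩)⟩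
          have hRectNQ : ∀ r ∈ RectFam, Rect r ⊆ N ∪ Q := by
            intro r hr
            rcases Finset.mem_union.mp hr with h | h
            · intro z hz
              refine Or.inr ?_
              rw [hQdef]
              exact Set.mem_biUnion h hz
            · obtain ⟨p, hp, rfl⟩ := Finset.mem_image.mp h
              rw [Set.Finite.mem_toFinset] at hp
              intro z hz
              refine Or.inl ⟨p, hp.1, ?_⟩
              rw [hgRect_eq p]
              exact hz
          have hholeΩ : ∀ c : Set ℂ, IsGHole G (D ∪ Q) c → c ∩ ball q ε ⊆ Ω := by
            intro c hc z hz
            obtain ⟨⟨z0, hz0, hceq⟩, -⟩ := id hc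
            have hzc : z ∈ G \ (D ∪ Q) := by
              have h := hz.1
              rw [hceq] at h
              exact connectedComponentIn_subset _ _ h
            refine ⟨hz.2, fun hmem => ?_⟩
            simp only [Set.mem_iUnion, exists_prop] at hmem
            obtain ⟨r, hr, hzr⟩ := hmem
            rcases hRectNQ r hr hzr with h | h
            · exact hzc.2 (Or.inl (hNsubD h))
            · exact hzc.2 (Or.inr h)
          refine ⟨ε, hεpos, ?_⟩
          set HS : Set (Set ℂ) := {c | IsGHole G (D ∪ Q) c ∧ (c ∩ ball q ε).Nonempty}
            with hHSdef
          have hpert : ∀ c ∈ HS, ∃ w, w ∈ Ω ∧ w ∈ c ∧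
              w.re ∉ Xset RectFam ∧ w.im ∉ Yset RectFam := by
            intro c hc
            obtain ⟨p0, hp0⟩ := hc.2
            have hp0Ω : p0 ∈ Ω := hholeΩ c hc.1 hp0
            obtain ⟨w, hwΩ, hwX, hwY, hseg⟩ := exists_perturb RectFam hΩopen hp0Ω
            refine ⟨w, hwΩ, ?_, hwX, hwY⟩
            have hσc : segment ℝ p0 w ⊆ c :=
              hjoin _ (convex_segment p0 w).isPreconnected (hseg.trans hΩND) c hc.1
                p0 (left_mem_segment ℝ p0 w) hp0.1
            exact hσc (right_mem_segment ℝ p0 w)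
          choose! wp hwΩ hwc hwX hwY using hpert
          have hinj : Set.InjOn (fun c => IdxOf RectFam (wp c)) HS := by
            intro c₁ hc₁ c₂ hc₂ hidx
            have hw₂cell : wp c₂ ∈ CellOf RectFam (wp c₁) :=
              mem_CellOf_of_idx_eq (hwX c₂ hc₂) (hwY c₂ hc₂) hidx
            have hw₁cell : wp c₁ ∈ CellOf RectFam (wp c₁) := self_mem_CellOf _ _
            have hσcell : segment ℝ (wp c₁) (wp c₂) ⊆ CellOf RectFam (wp c₁) :=
              (convex_CellOf RectFam (wp c₁)).segment_subset hw₁cell hw₂cell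
            have hσball : segment ℝ (wp c₁) (wp c₂) ⊆ ball q ε :=
              (convex_ball q ε).segment_subset (hwΩ c₁ hc₁).1 (hwΩ c₂ hc₂).1
            have hσΩ : segment ℝ (wp c₁) (wp c₂) ⊆ Ω := by
              intro u hu
              refine ⟨hσball hu, fun hmem => ?_⟩
              simp only [Set.mem_iUnion, exists_prop] at hmem
              obtain ⟨r, hr, hur⟩ := hmem
              have hw1r : wp c₁ ∈ Rect r :=
                mem_Rect_of_cell hr (hwX c₁ hc₁) (hwY c₁ hc₁) (hσcell hu) hur
              refine (hwΩ c₁ hc₁).2 ?_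
              simp only [Set.mem_iUnion, exists_prop]
              exact ⟨r, hr, hw1r⟩
            have hσc₁ : segment ℝ (wp c₁) (wp c₂) ⊆ c₁ :=
              hjoin _ (convex_segment _ _).isPreconnected (hσΩ.trans hΩND) c₁ hc₁.1
                (wp c₁) (left_mem_segment ℝ _ _) (hwc c₁ hc₁)
            have hw₂c₁ : wp c₂ ∈ c₁ := hσc₁ (right_mem_segment ℝ _ _)
            obtain ⟨-, e1⟩ := hole_eq_cci hc₁.1 hw₂c₁
            obtain ⟨-, e2⟩ := hole_eq_cci hc₂.1 (hwc c₂ hc₂)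
            exact e1.trans e2.symm
          have himg : ((fun c => IdxOf RectFam (wp c)) '' HS).Finite := by
            refine Set.Finite.subset
              (((Xset RectFam).powerset ×ˢ (Yset RectFam).powerset)).finite_toSet ?_
            rintro pr ⟨c, hc, rfl⟩
            simp only [Finset.coe_product, Set.mem_prod, Finset.mem_coe,
              Finset.mem_powerset, IdxOf]
            exact ⟨Finset.filter_subset _ _, Finset.filter_subset _ _⟩
          exact Set.Finite.of_finite_image himg hinj
      -- ### globally, only finitely many holes of `D ∪ Q`
      have hHS : {c : Set ℂ | IsGHole G (D ∪ Q) c}.Finite := by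
        choose! εq hεqpos hεqfin using perq
        obtain ⟨TQ, hTQ⟩ := hQcpt.elim_finite_subcover (fun q : ↥Q => ball (q:ℂ) (εq q))
          (fun _ => isOpen_ball)
          (by intro z hz
              exact Set.mem_iUnion.mpr ⟨⟨z, hz⟩, mem_ball_self (hεqpos z hz)⟩)
        have hsub : {c : Set ℂ | IsGHole G (D ∪ Q) c} ⊆
            ⋃ q ∈ TQ, {c : Set ℂ | IsGHole G (D ∪ Q) c ∧ (c ∩ ball (q:ℂ) (εq q)).Nonempty} := by
          intro c hc
          obtain ⟨w, hwc, hwQ⟩ := htouch c hc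
          have hw2 := hTQ hwQ
          simp only [Set.mem_iUnion] at hw2
          obtain ⟨q, hqT, hwq⟩ := hw2
          have hne : (c ∩ ball (q:ℂ) (εq q)).Nonempty := by
            obtain ⟨p, hp1, hp2⟩ := mem_closure_iff.mp hwc _ isOpen_ball hwq
            exact ⟨p, hp2, hp1⟩
          exact Set.mem_biUnion hqT ⟨hc, hne⟩
        exact Set.Finite.subset
          (Set.Finite.biUnion TQ.finite_toSet (fun q _ => hεqfin q q.2)) hsub
      -- ### conclusion: all holes of `D ∪ K` lie in a fixed compact subset of `G`
      set LQ : Set ℂ := Q ∪ ⋃ c ∈ {c : Set ℂ | IsGHole G (D ∪ Q) c}, closure c with hLQdef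
      have hLQcpt : IsCompact LQ := by
        refine hQcpt.union ?_
        refine Set.Finite.isCompact_biUnion hHS ?_
        intro c hcm
        obtain ⟨-, L, hL, hLG, hcL⟩ := id hcm
        exact hL.of_isClosed_subset isClosed_closure (hL.isClosed.closure_subset_iff.mpr hcL)
      have hLQG : LQ ⊆ G := by
        rintro z (hz | hz)
        · exact hQG hz
        · simp only [Set.mem_iUnion, Set.mem_setOf_eq, exists_prop] at hz
          obtain ⟨c, hcm, hzc⟩ := hz
          obtain ⟨-, L, hL, hLG, hcL⟩ := id hcm
          exact hLG ((hL.isClosed.closure_subset_iff.mpr hcL) hzc)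
      refine ⟨LQ, hLQcpt, hLQG, ?_⟩
      intro z hz
      simp only [Set.mem_iUnion, Set.mem_setOf_eq, exists_prop] at hz
      obtain ⟨g, hg, hzg⟩ := hz
      by_cases hzQ : z ∈ Q
      · exact Or.inl hzQ
      · obtain ⟨hzGDK, hgeq⟩ := hole_eq_cci hg hzg
        obtain ⟨-, L, hL, hLG, hgL⟩ := id hg
        have hzmem : z ∈ G \ (D ∪ Q) := ⟨hzGDK.1, by
          rintro (h | h)
          · exact hzGDK.2 (Or.inl h)
          · exact hzQ h⟩
        have hcsub : connectedComponentIn (G \ (D ∪ Q)) z ⊆ g := by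
          rw [hgeq]
          refine isPreconnected_connectedComponentIn.subset_connectedComponentIn
            (mem_connectedComponentIn hzmem) ?_
          refine (connectedComponentIn_subset _ _).trans ?_
          intro p hp
          exact ⟨hp.1, by
            rintro (h | h)
            · exact hp.2 (Or.inl h)
            · exact hp.2 (Or.inr (hKQ h))⟩
        have hchole : IsGHole G (D ∪ Q) (connectedComponentIn (G \ (D ∪ Q)) z) :=
          ⟨⟨z, hzmem, rfl⟩, L, hL, hLG, hcsub.trans hgL⟩
        refine Or.inr ?_
        simp only [Set.mem_iUnion, Set.mem_setOf_eq, exists_prop]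
        exact ⟨connectedComponentIn (G \ (D ∪ Q)) z, hchole,
          subset_closure (mem_connectedComponentIn hzmem)⟩
  · rintro ⟨C₁, -, -, -, hCC₁, M, hM⟩
    exact ⟨M, fun z hz => hM z (hCC₁ hz)⟩
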